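/- The Laurent polynomials Δ_G = 24 − 5(x + x^{-1} + y + y^{-1} + u + u^{-1} + v + v^{-1}) + Σ (products as in the previous statement) and Δ_{G*} = 8 − x − x^{-1} − y − y^{-1} − u − u^{-1} − v − v^{-1} in ℤ[x^{±1}, y^{±1}, u^{±1}, v^{±1}] satisfy Δ_G ≠ ± Δ_{G*}. -/

import Mathlib

abbrev Lau4 : Type := AddMonoidAlgebra ℤ (ℤ × ℤ × ℤ × ℤ)

noncomputable def X : Lau4 := AddMonoidAlgebra.single ((1, 0, 0, 0) : ℤ × ℤ × ℤ × ℤ) 1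
noncomputable def X' : Lau4 := AddMonoidAlgebra.single ((-1, 0, 0, 0) : ℤ × ℤ × ℤ × ℤ) 1
noncomputable def Y : Lau4 := AddMonoidAlgebra.single ((0, 1, 0, 0) : ℤ × ℤ × ℤ × ℤ) 1
noncomputable def Y' : Lau4 := AddMonoidAlgebra.single ((0, -1, 0, 0) : ℤ × ℤ × ℤ × ℤ) 1
noncomputable def U : Lau4 := AddMonoidAlgebra.single ((0, 0, 1, 0) : ℤ × ℤ × ℤ × ℤ) 1
noncomputable def U' : Lau4 := AddMonoidAlgebra.single ((0, 0, -1, 0) : ℤ × ℤ × ℤ × ℤ) 1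
noncomputable def V : Lau4 := AddMonoidAlgebra.single ((0, 0, 0, 1) : ℤ × ℤ × ℤ × ℤ) 1
noncomputable def V' : Lau4 := AddMonoidAlgebra.single ((0, 0, 0, -1) : ℤ × ℤ × ℤ × ℤ) 1

noncomputable def DG : Lau4 :=
  24 - 5 * (X + X' + Y + Y' + U + U' + V + V')
    + (U * X + U' * X' + U * X' + U' * X)
    + (V * X + V' * X' + V * X' + V' * X)
    + (U * Y + U' * Y' + U * Y' + U' * Y)
    + (V * Y + V' * Y' + V * Y' + V' * Y)

noncomputable def DGstar : Lau4 := 8 - X - X' - Y - Y' - U - U' - V - V'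

noncomputable def c0 : Lau4 →+ ℤ :=
  (Finsupp.applyAddHom (0 : ℤ × ℤ × ℤ × ℤ) : ((ℤ × ℤ × ℤ × ℤ) →₀ ℤ) →+ ℤ).comp
    (AddMonoidAlgebra.coeffAddEquiv (R := ℤ) (M := ℤ × ℤ × ℤ × ℤ)).toAddMonoidHom

lemma c0_single (a : ℤ × ℤ × ℤ × ℤ) (b : ℤ) :
    c0 (AddMonoidAlgebra.single a b) = if a = 0 then b else 0 := by
  show Finsupp.single a b 0 = _
  rw [Finsupp.single_apply, eq_comm]

lemma num_single (n : ℕ) [n.AtLeastTwo] :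
    (OfNat.ofNat n : Lau4) = AddMonoidAlgebra.single 0 (OfNat.ofNat n : ℤ) := by
  rw [show (OfNat.ofNat n : Lau4) = ((n:ℕ):Lau4) by norm_cast, AddMonoidAlgebra.natCast_def]
  rfl

lemma hDG : c0 DG = 24 := by
  simp [DG, X, X', Y, Y', U, U', V, V', num_single, mul_add, add_mul,
    AddMonoidAlgebra.single_mul_single, map_add, map_sub, c0_single, Prod.ext_iff]

lemma hDGstar : c0 DGstar = 8 := by
  simp [DGstar, X, X', Y, Y', U, U', V, V', num_single, map_sub, c0_single, Prod.ext_iff]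

/-- `Δ_G ≠ ±Δ_{G*}`. -/
theorem genus2_deltas_differ : DG ≠ DGstar ∧ DG ≠ -DGstar := by
  constructor
  · intro h
    have := congrArg c0 h
    rw [hDG, hDGstar] at this
    norm_num at this
  · intro h
    have := congrArg c0 h
    rw [hDG, map_neg, hDGstar] at this
    norm_num at this
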